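/- arXiv:1207.2238 — 2 statements merged into one kernel-verified Lean document; each statement's English description precedes it below -/
import Mathlib

section
/- Let w̃ be a weight function with w̃(x) = x·exp(−(log x)/(log log x)) for large x. Then i_−(w̃) = i_+(w̃) = +∞. -/
open Filter MeasureTheory

noncomputable section

/-- Boundedness of a function on `[0,∞)`. -/
def BddOn (f : ℝ → ℝ) : Prop := BddAbove (f '' Set.Ici 0)

/-- The operator `G(f)(x) = ∫₀ˣ w(W⁻¹(f(u)))/w(W⁻¹(u)) du`. -/
def Gop (w Winv : ℝ → ℝ) (f : ℝ → ℝ) : ℝ → ℝ :=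
  fun x => ∫ u in (0:ℝ)..x, w (Winv (f u)) / w (Winv u)

/-- `i_η(w) = inf{n ≥ 2 : G^(n-1)(η·Id) is bounded}`. -/
def iIdx (w Winv : ℝ → ℝ) (η : ℝ) : ℕ∞ :=
  sInf {n : ℕ∞ | ∃ m : ℕ, n = (m : ℕ∞) ∧ 2 ≤ m ∧
    BddOn ((Gop w Winv)^[m-1] (fun x => η * x))}

/-- `i₋(w)`, the left limit of `η ↦ i_η(w)` at `1/2` (by monotonicity, the
supremum over `η ∈ (0,1/2)`). -/
def iMinus (w Winv : ℝ → ℝ) : ℕ∞ := ⨆ η ∈ Set.Ioo (0:ℝ) (1/2), iIdx w Winv η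

/-- `i₊(w)`, the right limit of `η ↦ i_η(w)` at `1/2` (by monotonicity, the
infimum over `η ∈ (1/2,1)`). -/
def iPlus (w Winv : ℝ → ℝ) : ℕ∞ := ⨅ η ∈ Set.Ioo (1/2 : ℝ) 1, iIdx w Winv η

end

section SlowWeightAuxiliary

open Filter MeasureTheory Set Real

namespace SWA


/-- `τ ↦ τ / log τ` is monotone on `[e, ∞)`. -/
lemma mono_div_log : MonotoneOn (fun τ : ℝ => τ / Real.log τ) (Ici (Real.exp 1)) := by
  have h1 : (1:ℝ) < Real.exp 1 := by
    have := Real.exp_one_gt_d9; linarith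
  apply monotoneOn_of_hasDerivWithinAt_nonneg (convex_Ici _)
    (f' := fun τ => (Real.log τ - 1) / (Real.log τ)^2)
  · apply ContinuousOn.div continuousOn_id
    · exact Real.continuousOn_log.mono (fun x hx => by
        simp only [mem_Ici] at hx; simp only [mem_compl_iff, mem_singleton_iff]; nlinarith)
    · intro x hx
      simp only [mem_Ici] at hx
      have : (1:ℝ) ≤ Real.log x := by
        rw [show (1:ℝ) = Real.log (Real.exp 1) by simp]
        exact Real.log_le_log (Real.exp_pos 1) hx
      linarith
  · intro x hx
    rw [interior_Ici] at hx
    have hx' : Real.exp 1 < x := hx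
    have hx0 : (0:ℝ) < x := lt_trans (by linarith) hx'
    have hlog : (1:ℝ) < Real.log x := by
      rw [show (1:ℝ) = Real.log (Real.exp 1) by simp]
      exact Real.log_lt_log (Real.exp_pos 1) hx'
    have h := (hasDerivAt_id x).div (Real.hasDerivAt_log (ne_of_gt hx0)) (by linarith)
    have heq : (1 * Real.log x - id x * x⁻¹) / (Real.log x)^2
        = (Real.log x - 1) / (Real.log x)^2 := by
      simp only [id]; rw [mul_inv_cancel₀ (ne_of_gt hx0)]; ring_nf
    rw [heq] at h
    exact h.hasDerivWithinAt
  · intro x hx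
    rw [interior_Ici] at hx
    have hlog : (1:ℝ) < Real.log x := by
      rw [show (1:ℝ) = Real.log (Real.exp 1) by simp]
      exact Real.log_lt_log (Real.exp_pos 1) hx
    exact div_nonneg (by linarith) (sq_nonneg _)

lemma tendsto_div_log : Tendsto (fun τ : ℝ => τ / Real.log τ) atTop atTop := by
  apply tendsto_atTop.2
  intro b
  rcases le_or_gt b 0 with hb | hb
  · filter_upwards [eventually_ge_atTop (Real.exp 1)] with τ hτ
    have h1 : (0:ℝ) < τ := lt_of_lt_of_le (Real.exp_pos 1) hτ
    have h2 : (0:ℝ) < Real.log τ := Real.log_pos (by nlinarith [Real.exp_one_gt_d9])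
    have : 0 ≤ τ / Real.log τ := by positivity
    linarith
  · have h := Real.isLittleO_log_id_atTop.def (c := (1/b)) (by positivity)
    filter_upwards [h, eventually_ge_atTop (max (Real.exp 1) 1)] with τ h1 h2
    have hτ1 : (1:ℝ) ≤ τ := le_trans (le_max_right _ _) h2
    have hτe : Real.exp 1 ≤ τ := le_trans (le_max_left _ _) h2
    have hτ0 : (0:ℝ) < τ := by linarith
    have hlog : (0:ℝ) < Real.log τ := Real.log_pos (by nlinarith [Real.exp_one_gt_d9])
    simp only [id, Real.norm_eq_abs, abs_of_pos hlog, abs_of_pos hτ0] at h1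
    rw [le_div_iff₀ hlog]
    calc b * Real.log τ ≤ b * (1/b * τ) := by
          apply mul_le_mul_of_nonneg_left h1 (le_of_lt hb)
      _ = τ := by field_simp


noncomputable def gfun (x : ℝ) : ℝ := Real.log x / Real.log (Real.log x)


lemma one_lt_exp_one : (1:ℝ) < Real.exp 1 := by have := Real.exp_one_gt_d9; linarith

lemma gfun_mono : MonotoneOn gfun (Ici (Real.exp (Real.exp 1))) := by
  intro a ha b hb hab
  simp only [mem_Ici] at ha hb
  have h0 : (0:ℝ) < Real.exp (Real.exp 1) := Real.exp_pos _
  have hla : Real.exp 1 ≤ Real.log a := by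
    rw [show Real.exp 1 = Real.log (Real.exp (Real.exp 1)) by simp]
    exact Real.log_le_log h0 ha
  have hlb : Real.exp 1 ≤ Real.log b := by
    rw [show Real.exp 1 = Real.log (Real.exp (Real.exp 1)) by simp]
    exact Real.log_le_log h0 hb
  exact mono_div_log hla hlb (Real.log_le_log (by linarith) hab)

lemma gfun_tendsto : Tendsto gfun atTop atTop :=
  tendsto_div_log.comp Real.tendsto_log_atTop

lemma hasDerivAt_loglog (x : ℝ) (hx : 1 < x) :
    HasDerivAt (fun y => Real.log (Real.log y)) ((Real.log x)⁻¹ * x⁻¹) x := by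
  have hx0 : x ≠ 0 := by linarith
  have hlx : Real.log x ≠ 0 := ne_of_gt (Real.log_pos hx)
  exact (Real.hasDerivAt_log hlx).comp x (Real.hasDerivAt_log hx0)

lemma hasDerivAt_gfun (x : ℝ) (hx : Real.exp (Real.exp 1) < x) :
    HasDerivAt gfun
      ((Real.log (Real.log x) - 1) / (x * (Real.log (Real.log x))^2)) x := by
  have hee : (1:ℝ) < Real.exp (Real.exp 1) := by
    have := Real.exp_one_gt_d9
    calc (1:ℝ) < Real.exp 1 := one_lt_exp_one
      _ ≤ Real.exp (Real.exp 1) := Real.exp_le_exp.2 (by linarith)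
  have hx1 : 1 < x := lt_trans hee hx
  have hx0 : x ≠ 0 := by linarith
  have hlx_pos : 0 < Real.log x := Real.log_pos hx1
  have hlx : Real.log x ≠ 0 := ne_of_gt hlx_pos
  have hllx_pos : 0 < Real.log (Real.log x) := by
    apply Real.log_pos
    calc (1:ℝ) < Real.exp 1 := one_lt_exp_one
      _ = Real.log (Real.exp (Real.exp 1)) := by simp
      _ < Real.log x := Real.log_lt_log (Real.exp_pos _) hx
  have hllx : Real.log (Real.log x) ≠ 0 := ne_of_gt hllx_pos
  have h := (Real.hasDerivAt_log hx0).div (hasDerivAt_loglog x hx1) hllx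
  have heq : (x⁻¹ * Real.log (Real.log x) - Real.log x * ((Real.log x)⁻¹ * x⁻¹)) /
      (Real.log (Real.log x))^2
      = (Real.log (Real.log x) - 1) / (x * (Real.log (Real.log x))^2) := by
    field_simp
  rw [heq] at h
  exact h

lemma eventually_pow_loglog_le (C : ℝ) (k : ℕ) :
    ∀ᶠ u in atTop, C * (Real.log (Real.log u))^k ≤ (1/4) * Real.log u := by
  have h1 : ∀ᶠ τ in atTop, (4*|C|+1) ≤ Real.exp τ / τ^k := by
    have := tendsto_exp_div_pow_atTop k
    exact this.eventually_ge_atTop _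
  have h2 : Tendsto (fun u : ℝ => Real.log (Real.log u)) atTop atTop :=
    Real.tendsto_log_atTop.comp Real.tendsto_log_atTop
  filter_upwards [h2.eventually h1, h2.eventually (eventually_ge_atTop (1:ℝ)),
    eventually_gt_atTop (1:ℝ)] with u hu hτ1 hu1
  set τ := Real.log (Real.log u) with hτ
  have hτ0 : (0:ℝ) < τ := by linarith
  have hτk : (0:ℝ) < τ^k := by positivity
  have hlu : Real.exp τ = Real.log u := by
    rw [hτ, Real.exp_log]
    exact Real.log_pos hu1
  rw [le_div_iff₀ hτk] at hu
  have h3 : C * τ^k ≤ |C| * τ^k := mul_le_mul_of_nonneg_right (le_abs_self C) (le_of_lt hτk)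
  have h4 : (4*|C|+1) * τ^k ≤ Real.log u := by rwa [hlu] at hu
  nlinarith [abs_nonneg C]

end SWA

end SlowWeightAuxiliary

open Filter MeasureTheory Set Real

set_option maxHeartbeats 2000000 in
/-- For the weight `w̃(x) = x·exp(−log x / log log x)` (for large `x`), both critical
indexes are infinite: `i₋(w̃) = i₊(w̃) = +∞`. -/
theorem iPlusMinus_infinite_of_slow_weight
(w ℓ W : ℝ → ℝ)
    (hw_cont : ContinuousOn w (Set.Ici 0))
    (hw_pos : ∀ x, 0 ≤ x → 0 < w x)
    (hw_mono : MonotoneOn w (Set.Ici 0))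
    (hwl : ∀ x, 0 < x → w x = x / ℓ x)
    (hl_slow : ∀ c, 0 < c → Tendsto (fun x => ℓ (c * x) / ℓ x) atTop (nhds 1))
    (hl_inf : Tendsto ℓ atTop atTop)
    (hW : ∀ x, W x = ∫ u in (0:ℝ)..x, 1 / w u)
    (Winv : ℝ → ℝ)
    (hWinv_left : ∀ x, 0 ≤ x → Winv (W x) = x)
    (hWinv_right : ∀ x, 0 ≤ x → W (Winv x) = x)
    (hw_eq : ∃ x₀ : ℝ, ∀ x : ℝ, x₀ ≤ x →
      w x = x * Real.exp (-(Real.log x / Real.log (Real.log x)))) :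
    iMinus w Winv = (⊤ : ℕ∞) ∧ iPlus w Winv = (⊤ : ℕ∞) := by
  classical
  obtain ⟨x₀, hx₀⟩ := hw_eq
  -- the master threshold for the explicit formula
  set T : ℝ := max x₀ (Real.exp (Real.exp 2)) + 1 with hT_def
  have hT_ge : Real.exp (Real.exp 2) ≤ T := le_trans (le_max_right _ _) (by linarith)
  have hT_pos : 0 < T := lt_of_lt_of_le (Real.exp_pos _) hT_ge
  have hwT : ∀ x, T ≤ x → w x = x * Real.exp (-(SWA.gfun x)) := by
    intro x hx
    exact hx₀ x (le_trans (le_trans (le_max_left _ _) (by linarith)) hx)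
  -- basic numeric facts on [T, ∞)
  have hbasic : ∀ x, T ≤ x → Real.exp 2 ≤ Real.log x ∧ 2 ≤ Real.log (Real.log x)
      ∧ 0 < x ∧ 0 ≤ SWA.gfun x ∧ Real.exp (Real.exp 1) ≤ x := by
    intro x hx
    have hx0 : 0 < x := lt_of_lt_of_le hT_pos hx
    have h1 : Real.exp 2 ≤ Real.log x := by
      calc Real.exp 2 = Real.log (Real.exp (Real.exp 2)) := by simp
        _ ≤ Real.log x := Real.log_le_log (Real.exp_pos _) (le_trans hT_ge hx)
    have h2 : 2 ≤ Real.log (Real.log x) := by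
      calc (2:ℝ) = Real.log (Real.exp 2) := by simp
        _ ≤ Real.log (Real.log x) := Real.log_le_log (Real.exp_pos _) h1
    refine ⟨h1, h2, hx0, ?_, ?_⟩
    · have : 0 ≤ Real.log x := le_trans (le_of_lt (Real.exp_pos _)) h1
      have : 0 ≤ Real.log (Real.log x) := by linarith
      exact div_nonneg (by linarith [Real.exp_pos 2]) this
    · calc Real.exp (Real.exp 1) ≤ Real.exp (Real.exp 2) :=
            Real.exp_le_exp.2 (Real.exp_le_exp.2 one_le_two)
        _ ≤ x := le_trans hT_ge hx
  -- the formula for 1/w on [T, ∞)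
  have hwinvT : ∀ x, T ≤ x → 1 / w x = Real.exp (SWA.gfun x) / x := by
    intro x hx
    have hx0 : 0 < x := lt_of_lt_of_le hT_pos hx
    rw [hwT x hx, Real.exp_neg]
    field_simp
  -- continuity of 1/w
  have h1w_cont : ContinuousOn (fun u => 1 / w u) (Set.Ici 0) := by
    exact ContinuousOn.div continuousOn_const hw_cont
      (fun x hx => ne_of_gt (hw_pos x hx))
  -- interval integrability of 1/w
  have hWint : ∀ a b : ℝ, 0 ≤ a → 0 ≤ b →
      IntervalIntegrable (fun u => 1 / w u) volume a b := by
    intro a b ha hb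
    apply ContinuousOn.intervalIntegrable
    apply h1w_cont.mono
    intro x hx
    rcases le_total a b with h | h
    · rw [uIcc_of_le h] at hx; exact le_trans ha hx.1
    · rw [uIcc_of_ge h] at hx; exact le_trans hb hx.1
  have hW0 : W 0 = 0 := by
    rw [hW]; simp
  have hWsub : ∀ a b : ℝ, 0 ≤ a → 0 ≤ b → W b - W a = ∫ u in a..b, 1 / w u := by
    intro a b ha hb
    have h := intervalIntegral.integral_add_adjacent_intervals
      (hWint 0 a le_rfl ha) (hWint a b ha hb)
    rw [hW a, hW b]
    linarith
  have hWsm : StrictMonoOn W (Set.Ici 0) := by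
    intro a ha b hb hab
    have h : 0 < ∫ u in a..b, 1 / w u := by
      apply intervalIntegral.intervalIntegral_pos_of_pos_on (hWint a b ha hb)
      · intro x hx
        have hx0 : 0 ≤ x := le_trans ha (le_of_lt hx.1)
        exact div_pos one_pos (hw_pos x hx0)
      · exact hab
    have := hWsub a b ha hb
    linarith
  have hWpos : ∀ x : ℝ, 0 < x → 0 < W x := by
    intro x hx
    have := hWsm (Set.self_mem_Ici) (Set.mem_Ici.2 (le_of_lt hx)) hx
    rw [hW0] at this
    exact this
  have hWderiv : ∀ x : ℝ, 0 < x → HasDerivAt W (1 / w x) x := by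
    intro x hx
    have hWfun : W = fun y => ∫ u in (0:ℝ)..y, 1 / w u := funext hW
    rw [hWfun]
    apply intervalIntegral.integral_hasDerivAt_right
      (hWint 0 x le_rfl (le_of_lt hx))
    · exact (h1w_cont.mono (Set.Ioi_subset_Ici_self)).stronglyMeasurableAtFilter
        isOpen_Ioi x hx
    · exact (h1w_cont.continuousAt (Ici_mem_nhds hx))
  have hWcont : ContinuousOn W (Set.Ici 0) := by
    intro x hx
    have hx0 : (0:ℝ) ≤ x := hx
    have hmem : (0:ℝ) ∈ Set.uIcc 0 (x+1) := Set.left_mem_uIcc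
    have hc : ContinuousOn (fun y => ∫ t in (0:ℝ)..y, 1 / w t) (Set.uIcc 0 (x+1)) :=
      intervalIntegral.continuousOn_primitive_interval'
        (hWint 0 (x+1) le_rfl (by linarith)) hmem
    have hcW : ContinuousOn W (Set.uIcc 0 (x+1)) := by
      apply hc.congr
      intro y _
      exact hW y
    have hxmem : x ∈ Set.uIcc 0 (x+1) := by
      rw [Set.uIcc_of_le (by linarith : (0:ℝ) ≤ x+1)]
      exact ⟨hx0, by linarith⟩
    have hcwa : ContinuousWithinAt W (Set.uIcc 0 (x+1)) x := hcW x hxmem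
    apply hcwa.mono_of_mem_nhdsWithin
    have h1 : Set.Ici (0:ℝ) ∩ Set.Iio (x+1) ∈ nhdsWithin x (Set.Ici 0) :=
      inter_mem_nhdsWithin _ (Iio_mem_nhds (by linarith))
    apply Filter.mem_of_superset h1
    intro y hy
    rw [Set.uIcc_of_le (by linarith : (0:ℝ) ≤ x+1)]
    exact ⟨hy.1, le_of_lt hy.2⟩
  have hWinf : Tendsto W atTop atTop := by
    have hlb : ∀ x, T ≤ x → W T + (Real.log x - Real.log T) ≤ W x := by
      intro x hx
      have hTx : ∀ u ∈ Set.Icc T x, 1 / u ≤ 1 / w u := by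
        intro u hu
        have hu0 : 0 < u := lt_of_lt_of_le hT_pos hu.1
        have hgu : 0 ≤ SWA.gfun u := (hbasic u hu.1).2.2.2.1
        have hwu : w u ≤ u := by
          rw [hwT u hu.1]
          calc u * Real.exp (-SWA.gfun u) ≤ u * 1 := by
                apply mul_le_mul_of_nonneg_left _ (le_of_lt hu0)
                rw [Real.exp_le_one_iff]
                linarith
            _ = u := mul_one u
        exact one_div_le_one_div_of_le (hw_pos u (le_of_lt hu0)) hwu
      have hint1 : IntervalIntegrable (fun u : ℝ => 1 / u) volume T x := by
        apply ContinuousOn.intervalIntegrable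
        apply ContinuousOn.div continuousOn_const continuousOn_id
        intro y hy
        rw [Set.uIcc_of_le hx] at hy
        exact ne_of_gt (lt_of_lt_of_le hT_pos hy.1)
      have hcomp : (∫ u in T..x, 1 / u) ≤ ∫ u in T..x, 1 / w u :=
        intervalIntegral.integral_mono_on hx hint1
          (hWint T x (le_of_lt hT_pos) (le_trans (le_of_lt hT_pos) hx)) hTx
      have heval : (∫ u in T..x, 1 / u) = Real.log x - Real.log T := by
        rw [integral_one_div, Real.log_div (ne_of_gt (lt_of_lt_of_le hT_pos hx)) (ne_of_gt hT_pos)]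
        rw [Set.uIcc_of_le hx]
        intro h0
        exact absurd h0.1 (not_le.2 hT_pos)
      have := hWsub T x (le_of_lt hT_pos) (le_trans (le_of_lt hT_pos) hx)
      rw [heval] at hcomp
      linarith
    apply tendsto_atTop_mono' atTop _ (tendsto_atTop_add_const_left _ (W T - Real.log T)
      Real.tendsto_log_atTop)
    filter_upwards [eventually_ge_atTop T] with x hx
    have := hlb x hx
    linarith
  -- Winv is the genuine inverse on [0,∞)
  have hWinv_nonneg : ∀ u : ℝ, 0 ≤ u → 0 ≤ Winv u := by
    intro u hu
    obtain ⟨b, hb1, hb0⟩ := ((hWinf.eventually_ge_atTop u).and (eventually_ge_atTop (0:ℝ))).exists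
    have hsub : Set.Icc (W 0) (W b) ⊆ W '' Set.Icc 0 b :=
      intermediate_value_Icc hb0 (hWcont.mono (fun y hy => hy.1))
    have humem : u ∈ Set.Icc (W 0) (W b) := by rw [hW0]; exact ⟨hu, hb1⟩
    obtain ⟨x, hxm, hxe⟩ := hsub humem
    rw [← hxe, hWinv_left x hxm.1]
    exact hxm.1
  have hWinv_mono : ∀ u v : ℝ, 0 ≤ u → u ≤ v → Winv u ≤ Winv v := by
    intro u v hu huv
    by_contra h
    push_neg at h
    have := hWsm (Set.mem_Ici.2 (hWinv_nonneg v (le_trans hu huv)))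
      (Set.mem_Ici.2 (hWinv_nonneg u hu)) h
    rw [hWinv_right u hu, hWinv_right v (le_trans hu huv)] at this
    linarith
  have hWinv_ge : ∀ z u : ℝ, 0 ≤ z → 0 ≤ u → W z ≤ u → z ≤ Winv u := by
    intro z u hz hu hzu
    by_contra h
    push_neg at h
    have := hWsm (Set.mem_Ici.2 (hWinv_nonneg u hu)) (Set.mem_Ici.2 hz) h
    rw [hWinv_right u hu] at this
    linarith
  have hWinv_le : ∀ u b : ℝ, 0 ≤ u → 0 ≤ b → u ≤ W b → Winv u ≤ b := by
    intro u b hu hb hub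
    by_contra h
    push_neg at h
    have := hWsm (Set.mem_Ici.2 hb) (Set.mem_Ici.2 (hWinv_nonneg u hu)) h
    rw [hWinv_right u hu] at this
    linarith
  -- φ facts
  have hphi_pos : ∀ u : ℝ, 0 ≤ u → 0 < w (Winv u) := by
    intro u hu
    exact hw_pos _ (hWinv_nonneg u hu)
  have hphi_mono : ∀ u v : ℝ, 0 ≤ u → u ≤ v → w (Winv u) ≤ w (Winv v) := by
    intro u v hu huv
    exact hw_mono (Set.mem_Ici.2 (hWinv_nonneg u hu))
      (Set.mem_Ici.2 (hWinv_nonneg v (le_trans hu huv))) (hWinv_mono u v hu huv)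
  -- ratio lower bound from monotonicity of g
  have hratio : ∀ z x : ℝ, T ≤ z → z ≤ x → z / x ≤ w z / w x := by
    intro z x hz hzx
    have hz0 : 0 < z := lt_of_lt_of_le hT_pos hz
    have hx0 : 0 < x := lt_of_lt_of_le hz0 hzx
    have hwx : 0 < w x := hw_pos x (le_of_lt hx0)
    have hgle : SWA.gfun z ≤ SWA.gfun x :=
      SWA.gfun_mono (Set.mem_Ici.2 (hbasic z hz).2.2.2.2)
        (Set.mem_Ici.2 (hbasic x (le_trans hz hzx)).2.2.2.2) hzx
    rw [div_le_div_iff₀ hx0 hwx, hwT z hz, hwT x (le_trans hz hzx)]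
    have hee : Real.exp (-SWA.gfun x) ≤ Real.exp (-SWA.gfun z) :=
      Real.exp_le_exp.2 (by linarith)
    nlinarith [mul_le_mul_of_nonneg_left hee (mul_nonneg (le_of_lt hz0) (le_of_lt hx0))]
  -- upper bound for W
  obtain ⟨T2, hT2_ge, hWub⟩ :
      ∃ T2, T ≤ T2 ∧ ∀ x, T2 ≤ x →
        W x ≤ 5 * Real.log (Real.log x) * Real.exp (SWA.gfun x) := by
    set F : ℝ → ℝ := fun t => 4 * Real.log (Real.log t) * Real.exp (SWA.gfun t) with hF_def
    have hone_lt : ∀ t : ℝ, T ≤ t → (1:ℝ) < t := by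
      intro t ht
      have h1 : (1:ℝ) < Real.exp (Real.exp 2) := by
        nlinarith [Real.add_one_le_exp (Real.exp 2), Real.exp_pos 2]
      linarith [le_trans hT_ge ht]
    have hloglog_cont : ContinuousOn (fun t : ℝ => Real.log (Real.log t)) (Set.Ici T) := by
      apply ContinuousOn.comp Real.continuousOn_log (Real.continuousOn_log.mono ?_) ?_
      · intro t ht
        simp only [Set.mem_compl_iff, Set.mem_singleton_iff]
        exact ne_of_gt (lt_of_lt_of_le hT_pos ht)
      · intro t ht
        simp only [Set.mem_compl_iff, Set.mem_singleton_iff]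
        exact ne_of_gt (Real.log_pos (hone_lt t ht))
    have hgfun_cont : ContinuousOn SWA.gfun (Set.Ici T) := by
      apply ContinuousOn.div (Real.continuousOn_log.mono ?_) hloglog_cont ?_
      · intro t ht
        exact ne_of_gt (lt_of_lt_of_le hT_pos ht)
      · intro t ht
        have := (hbasic t ht).2.1
        intro h; rw [h] at this; linarith
    have hF_cont : ContinuousOn F (Set.Ici T) :=
      (continuousOn_const.mul hloglog_cont).mul
        (Real.continuous_exp.comp_continuousOn hgfun_cont)
    have hF_deriv : ∀ t : ℝ, T < t →
        HasDerivAt F (4 * ((Real.log t)⁻¹ * t⁻¹) * Real.exp (SWA.gfun t)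
          + 4 * Real.log (Real.log t) * (Real.exp (SWA.gfun t) *
            ((Real.log (Real.log t) - 1) / (t * (Real.log (Real.log t))^2)))) t := by
      intro t ht
      have ht1 : (1:ℝ) < t := hone_lt t (le_of_lt ht)
      have htee : Real.exp (Real.exp 1) < t :=
        lt_of_le_of_lt (le_trans (Real.exp_le_exp.2 (Real.exp_le_exp.2 one_le_two)) hT_ge) ht
      exact ((SWA.hasDerivAt_loglog t ht1).const_mul 4).mul
        ((SWA.hasDerivAt_gfun t htee).exp)
    have hFW_mono : MonotoneOn (fun t => F t - W t) (Set.Ici T) := by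
      apply monotoneOn_of_hasDerivWithinAt_nonneg (convex_Ici T)
        (hF_cont.sub (hWcont.mono (fun t ht => le_trans (le_of_lt hT_pos) ht)))
        (f' := fun t => (4 * ((Real.log t)⁻¹ * t⁻¹) * Real.exp (SWA.gfun t)
          + 4 * Real.log (Real.log t) * (Real.exp (SWA.gfun t) *
            ((Real.log (Real.log t) - 1) / (t * (Real.log (Real.log t))^2)))) - 1 / w t)
      · intro t ht
        rw [interior_Ici] at ht
        exact ((hF_deriv t ht).sub (hWderiv t (lt_of_lt_of_le hT_pos (le_of_lt ht)))).hasDerivWithinAt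
      · intro t ht
        rw [interior_Ici] at ht
        have htT : T ≤ t := le_of_lt ht
        have ht0 : (0:ℝ) < t := lt_of_lt_of_le hT_pos htT
        obtain ⟨ha2, hb2, _, _, _⟩ := hbasic t htT
        have ha0 : (0:ℝ) < Real.log t := lt_of_lt_of_le (Real.exp_pos 2) ha2
        have hb0 : (0:ℝ) < Real.log (Real.log t) := by linarith
        have hE0 : (0:ℝ) < Real.exp (SWA.gfun t) := Real.exp_pos _
        rw [hwinvT t htT, sub_nonneg]
        set a := Real.log t
        set b := Real.log (Real.log t)
        set E := Real.exp (SWA.gfun t)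
        have key : E / t ≤ 4 * b * (E * ((b - 1) / (t * b^2))) := by
          rw [div_le_iff₀ ht0]
          have hexpand : 4 * b * (E * ((b - 1) / (t * b^2))) * t = 4 * E * (b-1) / b := by
            field_simp
          rw [hexpand, le_div_iff₀ hb0]
          nlinarith
        have h1 : (0:ℝ) ≤ 4 * (a⁻¹ * t⁻¹) * E := by positivity
        linarith
    have hmain : ∀ x, T ≤ x → W x ≤ F x + (W T - F T) := by
      intro x hx
      have := hFW_mono (Set.self_mem_Ici) (Set.mem_Ici.2 hx) hx
      simp only at this
      linarith
    have htail : ∀ᶠ x in atTop, T ≤ x ∧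
        W T - F T ≤ Real.exp (SWA.gfun x) := by
      apply Filter.Eventually.and (eventually_ge_atTop T)
      exact (Real.tendsto_exp_atTop.comp SWA.gfun_tendsto).eventually_ge_atTop _
    obtain ⟨T2', hT2'⟩ := eventually_atTop.1 htail
    refine ⟨max T2' T, le_max_right _ _, ?_⟩
    intro x hx
    obtain ⟨hxT, hxE⟩ := hT2' x (le_trans (le_max_left _ _) hx)
    have hb2 : 2 ≤ Real.log (Real.log x) := (hbasic x hxT).2.1
    have hE0 : (0:ℝ) < Real.exp (SWA.gfun x) := Real.exp_pos _
    have : W x ≤ F x + (W T - F T) := hmain x hxT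
    have hKle : W T - F T ≤ Real.log (Real.log x) * Real.exp (SWA.gfun x) := by
      calc W T - F T ≤ Real.exp (SWA.gfun x) := hxE
        _ = 1 * Real.exp (SWA.gfun x) := (one_mul _).symm
        _ ≤ Real.log (Real.log x) * Real.exp (SWA.gfun x) := by
            apply mul_le_mul_of_nonneg_right (by linarith) (le_of_lt hE0)
    have hFx : F x = 4 * Real.log (Real.log x) * Real.exp (SWA.gfun x) := rfl
    rw [hFx] at this
    linarith
  -- logarithmic increment bound
  have hlogdiff : ∀ z x : ℝ, T2 ≤ z → z ≤ x →
      (Real.log x - Real.log z) / (5 * Real.log (Real.log x)) ≤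
        Real.log (W x) - Real.log (W z) := by
    intro z x hz hzx
    rcases eq_or_lt_of_le hzx with rfl | hlt
    · simp
    have hzT : T ≤ z := le_trans hT2_ge hz
    have hz0 : (0:ℝ) < z := lt_of_lt_of_le hT_pos hzT
    have hx0 : (0:ℝ) < x := lt_of_lt_of_le hz0 hzx
    have hxT : T ≤ x := le_trans hzT hzx
    obtain ⟨hax2, hbx2, _, _, _⟩ := hbasic x hxT
    have hbx0 : (0:ℝ) < Real.log (Real.log x) := by linarith
    have hWz0 : (0:ℝ) < W z := hWpos z hz0
    have hL2mono : ∀ t, z ≤ t → t ≤ x → Real.log (Real.log t) ≤ Real.log (Real.log x) := by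
      intro t h1 h2
      have htT : T ≤ t := le_trans hzT h1
      have hTt : Real.exp (Real.exp 2) ≤ t := le_trans hT_ge htT
      have ht1 : (1:ℝ) < t := by
        linarith [Real.add_one_le_exp (Real.exp 2), Real.exp_pos (2:ℝ)]
      exact Real.log_le_log (Real.log_pos ht1) (Real.log_le_log (by linarith) h2)
    have hmono : MonotoneOn
        (fun t => Real.log (W t) - Real.log t / (5 * Real.log (Real.log x)))
        (Set.Icc z x) := by
      apply monotoneOn_of_hasDerivWithinAt_nonneg (convex_Icc z x)
        (f' := fun t => (1 / w t) / W t - t⁻¹ / (5 * Real.log (Real.log x)))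
      · apply ContinuousOn.sub
        · apply ContinuousOn.log
          · exact hWcont.mono (fun t ht => le_trans (le_of_lt hz0) ht.1)
          · intro t ht
            exact ne_of_gt (hWpos t (lt_of_lt_of_le hz0 ht.1))
        · exact (Real.continuousOn_log.mono
            (fun t ht => ne_of_gt (lt_of_lt_of_le hz0 ht.1))).div_const _
      · intro t ht
        rw [interior_Icc] at ht
        have ht0 : (0:ℝ) < t := lt_of_lt_of_le hz0 (le_of_lt ht.1)
        exact (((hWderiv t ht0).log (ne_of_gt (hWpos t ht0))).sub
          ((Real.hasDerivAt_log (ne_of_gt ht0)).div_const _)).hasDerivWithinAt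
      · intro t ht
        rw [interior_Icc] at ht
        have htz : z ≤ t := le_of_lt ht.1
        have htT : T ≤ t := le_trans hzT htz
        have ht0 : (0:ℝ) < t := lt_of_lt_of_le hT_pos htT
        have hWt0 : (0:ℝ) < W t := hWpos t ht0
        have hEt : (0:ℝ) < Real.exp (SWA.gfun t) := Real.exp_pos _
        have hub : W t ≤ 5 * Real.log (Real.log x) * Real.exp (SWA.gfun t) := by
          calc W t ≤ 5 * Real.log (Real.log t) * Real.exp (SWA.gfun t) :=
                hWub t (le_trans hz htz)
            _ ≤ 5 * Real.log (Real.log x) * Real.exp (SWA.gfun t) := by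
                apply mul_le_mul_of_nonneg_right _ (le_of_lt hEt)
                have := hL2mono t htz (le_of_lt ht.2)
                linarith
        rw [sub_nonneg, hwinvT t htT]
        have h5 : (0:ℝ) < 5 * Real.log (Real.log x) * Real.exp (SWA.gfun t) := by positivity
        calc t⁻¹ / (5 * Real.log (Real.log x))
            = (Real.exp (SWA.gfun t) / t) / (5 * Real.log (Real.log x) * Real.exp (SWA.gfun t)) := by
              field_simp
          _ ≤ (Real.exp (SWA.gfun t) / t) / W t := by
              apply div_le_div_of_nonneg_left _ hWt0 hub
              positivity
    have := hmono (Set.mem_Icc.2 ⟨le_refl z, hzx⟩) (Set.mem_Icc.2 ⟨hzx, le_refl x⟩) hzx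
    simp only at this
    have hsub : Real.log x / (5 * Real.log (Real.log x)) -
        Real.log z / (5 * Real.log (Real.log x)) =
        (Real.log x - Real.log z) / (5 * Real.log (Real.log x)) := by
      rw [div_sub_div_same]
    linarith
  -- two-sided control of Winv
  obtain ⟨T3, hT3_ge, hWinv_bounds⟩ :
      ∃ T3, T2 ≤ T3 ∧ ∀ u, T3 ≤ u →
        u ≤ Winv u ∧ Winv u ≤ Real.exp ((Real.log u)^2) ∧
        Real.log (Real.log (Winv u)) ≤ 2 * Real.log (Real.log u) := by
    have hWlb : ∀ x : ℝ, T^2 + 1 ≤ x →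
        Real.exp (SWA.gfun (Real.sqrt x)) * (Real.log x / 2) ≤ W x := by
      intro x hx
      have hx1 : (1:ℝ) ≤ x := by nlinarith [sq_nonneg T]
      have hx0 : (0:ℝ) < x := by linarith
      set r := Real.sqrt x with hr_def
      have hrT : T ≤ r := by
        rw [hr_def, Real.le_sqrt' hT_pos]
        nlinarith
      have hr0 : (0:ℝ) < r := lt_of_lt_of_le hT_pos hrT
      have hrx : r ≤ x := by
        rw [hr_def]
        calc Real.sqrt x ≤ Real.sqrt (x^2) := Real.sqrt_le_sqrt (by nlinarith)
          _ = x := Real.sqrt_sq (le_of_lt hx0)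
      have hlogr : Real.log r = Real.log x / 2 := Real.log_sqrt (le_of_lt hx0)
      have hWr : (0:ℝ) < W r := hWpos r hr0
      have hsub := hWsub r x (le_of_lt hr0) (le_of_lt hx0)
      have hcomp : (∫ u in r..x, Real.exp (SWA.gfun r) * (1/u)) ≤ ∫ u in r..x, 1 / w u := by
        apply intervalIntegral.integral_mono_on hrx
        · apply ContinuousOn.intervalIntegrable
          apply ContinuousOn.mul continuousOn_const
          apply ContinuousOn.div continuousOn_const continuousOn_id
          intro y hy
          rw [Set.uIcc_of_le hrx] at hy
          exact ne_of_gt (lt_of_lt_of_le hr0 hy.1)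
        · exact hWint r x (le_of_lt hr0) (le_of_lt hx0)
        · intro u hu
          have huT : T ≤ u := le_trans hrT hu.1
          rw [hwinvT u huT]
          have hu0 : (0:ℝ) < u := lt_of_lt_of_le hT_pos huT
          have hgle : SWA.gfun r ≤ SWA.gfun u :=
            SWA.gfun_mono (Set.mem_Ici.2 (hbasic r hrT).2.2.2.2)
              (Set.mem_Ici.2 (hbasic u huT).2.2.2.2) hu.1
          rw [mul_one_div, div_le_div_iff₀ hu0 hu0]
          have := Real.exp_le_exp.2 hgle
          nlinarith [Real.exp_pos (SWA.gfun r)]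
      have heval : (∫ u in r..x, Real.exp (SWA.gfun r) * (1/u))
          = Real.exp (SWA.gfun r) * (Real.log x / 2) := by
        rw [intervalIntegral.integral_const_mul, integral_one_div, Real.log_div
          (ne_of_gt hx0) (ne_of_gt hr0), hlogr]
        · ring
        · rw [Set.uIcc_of_le hrx]
          intro h0
          exact absurd h0.1 (not_le.2 hr0)
      rw [heval] at hcomp
      linarith
    have hlog3 : (1:ℝ) ≤ Real.log 3 := by
      rw [show (1:ℝ) = Real.log (Real.exp 1) by simp]
      apply Real.log_le_log (Real.exp_pos 1)
      nlinarith [Real.exp_one_lt_d9]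
    have hsev : ∀ᶠ s : ℝ in atTop, 3 ≤ s ∧ 4 * Real.log s ≤ s := by
      filter_upwards [eventually_ge_atTop (3:ℝ), SWA.tendsto_div_log.eventually_ge_atTop 4]
        with s h3 h4
      have hls : (1:ℝ) ≤ Real.log s := le_trans hlog3 (Real.log_le_log (by norm_num) h3)
      refine ⟨h3, ?_⟩
      rw [le_div_iff₀ (by linarith)] at h4
      linarith
    have hev1 : ∀ᶠ u in atTop, u ≤ Winv u := by
      filter_upwards [eventually_ge_atTop T2, SWA.eventually_pow_loglog_le 1 1,
        Real.tendsto_log_atTop.eventually_ge_atTop (16:ℝ)] with u hu2 hu4 hu16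
      have huT : T ≤ u := le_trans hT2_ge hu2
      have hu0 : (0:ℝ) < u := lt_of_lt_of_le hT_pos huT
      obtain ⟨ha2, hb2, _, hg0, _⟩ := hbasic u huT
      set a := Real.log u with ha_def
      set b := Real.log (Real.log u) with hb_def
      have hb0 : (0:ℝ) < b := by linarith
      have ha0 : (0:ℝ) < a := by linarith
      have hlogb : Real.log b ≤ b := by
        linarith [Real.log_le_sub_one_of_pos hb0]
      have hlog5 : Real.log 5 ≤ 4 := by
        linarith [Real.log_le_sub_one_of_pos (by norm_num : (0:ℝ) < 5)]
      have hb_le : b ≤ a / 4 := by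
        simp only [pow_one] at hu4
        linarith
      have hg_le : SWA.gfun u ≤ a / 2 := by
        have : SWA.gfun u = a / b := rfl
        rw [this]
        rw [div_le_div_iff₀ hb0 (by norm_num : (0:ℝ) < 2)]
        nlinarith
      have hWle : W u ≤ u := by
        have h1 : W u ≤ 5 * b * Real.exp (SWA.gfun u) := hWub u hu2
        have h2 : 5 * b * Real.exp (SWA.gfun u) = Real.exp (Real.log 5 + Real.log b + SWA.gfun u) := by
          rw [Real.exp_add, Real.exp_add, Real.exp_log (by norm_num : (0:ℝ) < 5),
            Real.exp_log hb0]
        have h3 : Real.log 5 + Real.log b + SWA.gfun u ≤ a := by linarith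
        calc W u ≤ 5 * b * Real.exp (SWA.gfun u) := h1
          _ = Real.exp (Real.log 5 + Real.log b + SWA.gfun u) := h2
          _ ≤ Real.exp a := Real.exp_le_exp.2 h3
          _ = u := Real.exp_log hu0
      exact hWinv_ge u u (le_of_lt hu0) (le_of_lt hu0) hWle
    have hev2 : ∀ᶠ u in atTop, Winv u ≤ Real.exp ((Real.log u)^2) := by
      filter_upwards [Real.tendsto_log_atTop.eventually hsev,
        eventually_ge_atTop (T^2 + 1), eventually_gt_atTop (0:ℝ)] with u hs huT hu0
      obtain ⟨hs3, hs4⟩ := hs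
      set s := Real.log u with hs_def
      set x := Real.exp (s^2) with hx_def
      have hs0 : (0:ℝ) < s := by linarith
      have hux : u ≤ x := by
        calc u = Real.exp s := (Real.exp_log hu0).symm
          _ ≤ Real.exp (s^2) := Real.exp_le_exp.2 (by nlinarith)
      have hxT : T^2 + 1 ≤ x := le_trans huT hux
      have hWlbx := hWlb x hxT
      have hlogx : Real.log x = s^2 := Real.log_exp _
      have hsqrtx : Real.sqrt x = Real.exp (s^2/2) := by
        rw [hx_def, show Real.exp (s^2) = Real.exp (s^2/2) * Real.exp (s^2/2) by
          rw [← Real.exp_add]; ring_nf]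
        exact Real.sqrt_mul_self (le_of_lt (Real.exp_pos _))
      have hgsqrt : SWA.gfun (Real.sqrt x) = (s^2/2) / Real.log (s^2/2) := by
        rw [hsqrtx]
        show Real.log (Real.exp (s^2/2)) / Real.log (Real.log (Real.exp (s^2/2)))
          = (s^2/2) / Real.log (s^2/2)
        rw [Real.log_exp]
      have hs22 : s ≤ s^2/2 := by nlinarith
      have hlogs22_pos : (1:ℝ) ≤ Real.log (s^2/2) := by
        calc (1:ℝ) ≤ Real.log 3 := hlog3
          _ ≤ Real.log (s^2/2) := Real.log_le_log (by norm_num) (by nlinarith)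
      have hlogs22_le : Real.log (s^2/2) ≤ 2 * Real.log s := by
        calc Real.log (s^2/2) ≤ Real.log (s^2) := Real.log_le_log (by nlinarith) (by nlinarith)
          _ = 2 * Real.log s := by
              rw [show s^2 = s*s by ring, Real.log_mul (ne_of_gt hs0) (ne_of_gt hs0)]; ring
      have hgs : s ≤ SWA.gfun (Real.sqrt x) := by
        have hc0 : (0:ℝ) < Real.log (s^2/2) := by linarith
        have hkey : s * Real.log (s^2/2) ≤ s^2/2 := by
          calc s * Real.log (s^2/2) ≤ s * (2*Real.log s) :=
                mul_le_mul_of_nonneg_left hlogs22_le (le_of_lt hs0)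
            _ ≤ s * (s/2) := by
                apply mul_le_mul_of_nonneg_left _ (le_of_lt hs0)
                linarith
            _ = s^2/2 := by ring
        rw [hgsqrt, le_div_iff₀ hc0]
        exact hkey
      have hWx : u ≤ W x := by
        have h1 : Real.exp s ≤ Real.exp (SWA.gfun (Real.sqrt x)) := Real.exp_le_exp.2 hgs
        have h2 : (1:ℝ) ≤ Real.log x / 2 := by rw [hlogx]; nlinarith
        calc u = Real.exp s := (Real.exp_log hu0).symm
          _ = Real.exp s * 1 := (mul_one _).symm
          _ ≤ Real.exp (SWA.gfun (Real.sqrt x)) * (Real.log x / 2) := by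
              apply mul_le_mul h1 h2 (by norm_num) (le_of_lt (Real.exp_pos _))
          _ ≤ W x := hWlbx
      exact hWinv_le u x (le_of_lt hu0) (le_of_lt (Real.exp_pos _)) hWx
    have hev3 : ∀ᶠ u in atTop, u ≤ Winv u ∧ Winv u ≤ Real.exp ((Real.log u)^2) ∧
        Real.log (Real.log (Winv u)) ≤ 2 * Real.log (Real.log u) := by
      filter_upwards [hev1, hev2, Real.tendsto_log_atTop.eventually_ge_atTop (3:ℝ),
        eventually_gt_atTop (0:ℝ)] with u h1 h2 hs3 hu0
      refine ⟨h1, h2, ?_⟩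
      set s := Real.log u with hs_def
      have hs0 : (0:ℝ) < s := by linarith
      have hWinvu0 : (0:ℝ) < Winv u := lt_of_lt_of_le hu0 h1
      have hlogWinv_le : Real.log (Winv u) ≤ s^2 := by
        calc Real.log (Winv u) ≤ Real.log (Real.exp (s^2)) := Real.log_le_log hWinvu0 h2
          _ = s^2 := Real.log_exp _
      have hlogWinv_pos : (0:ℝ) < Real.log (Winv u) := by
        calc (0:ℝ) < s := hs0
          _ = Real.log u := rfl
          _ ≤ Real.log (Winv u) := Real.log_le_log hu0 h1
      calc Real.log (Real.log (Winv u)) ≤ Real.log (s^2) :=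
            Real.log_le_log hlogWinv_pos hlogWinv_le
        _ = 2 * Real.log s := by
            rw [show s^2 = s*s by ring, Real.log_mul (ne_of_gt hs0) (ne_of_gt hs0)]; ring
    obtain ⟨T3', hT3'⟩ := eventually_atTop.1 hev3
    exact ⟨max T3' T2, le_max_right _ _, fun u hu => hT3' u (le_trans (le_max_left _ _) hu)⟩
  -- the invariant
  set P : (ℝ → ℝ) → Prop := fun f =>
    MonotoneOn f (Set.Ici 0) ∧ ∀ u : ℝ, 0 ≤ u → 0 ≤ f u ∧ f u ≤ u with hP_def
  have hH01 : ∀ f, P f → ∀ u : ℝ, 0 ≤ u →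
      0 ≤ w (Winv (f u)) / w (Winv u) ∧ w (Winv (f u)) / w (Winv u) ≤ 1 := by
    intro f hPf u hu
    obtain ⟨hf0, hfu⟩ := hPf.2 u hu
    have h1 : 0 < w (Winv u) := hphi_pos u hu
    constructor
    · exact div_nonneg (le_of_lt (hphi_pos (f u) hf0)) (le_of_lt h1)
    · rw [div_le_one h1]
      exact hphi_mono (f u) u hf0 hfu
  have hInt : ∀ f, P f → ∀ a b : ℝ, 0 ≤ a → a ≤ b →
      IntervalIntegrable (fun u => w (Winv (f u)) / w (Winv u)) volume a b := by
    intro f hPf a b ha hab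
    rw [intervalIntegrable_iff, Set.uIoc_of_le hab]
    have hsub : Set.Ioc a b ⊆ Set.Ici (0:ℝ) := fun u hu => le_trans ha (le_of_lt hu.1)
    have hmonoA : MonotoneOn (fun u => w (Winv (f u))) (Set.Ioc a b) := by
      intro u hu v hv huv
      have hu0 : (0:ℝ) ≤ u := hsub hu
      have hv0 : (0:ℝ) ≤ v := hsub hv
      have h1 : f u ≤ f v := hPf.1 hu0 hv0 huv
      exact hphi_mono (f u) (f v) (hPf.2 u hu0).1 h1
    have hmonoB : MonotoneOn (fun u => w (Winv u)) (Set.Ioc a b) := by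
      intro u hu v hv huv
      exact hphi_mono u v (hsub hu) huv
    have hA := aemeasurable_restrict_of_monotoneOn (μ := volume) measurableSet_Ioc hmonoA
    have hB := aemeasurable_restrict_of_monotoneOn (μ := volume) measurableSet_Ioc hmonoB
    have hAB : AEMeasurable (fun u => w (Winv (f u)) / w (Winv u))
        (volume.restrict (Set.Ioc a b)) := hA.div hB
    apply Integrable.mono' (g := fun _ => (1:ℝ))
      (integrableOn_const measure_Ioc_lt_top.ne)
      hAB.aestronglyMeasurable
    rw [ae_restrict_iff' measurableSet_Ioc]
    apply Filter.Eventually.of_forall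
    intro u hu
    obtain ⟨hl, hr⟩ := hH01 f hPf u (hsub hu)
    rw [Real.norm_eq_abs, abs_le]
    constructor <;> linarith
  have hGopP : ∀ f, P f → P (Gop w Winv f) := by
    intro f hPf
    constructor
    · intro a ha b hb hab
      simp only [Set.mem_Ici] at ha hb
      have hsplit := intervalIntegral.integral_add_adjacent_intervals
        (hInt f hPf 0 a le_rfl ha) (hInt f hPf a b ha hab)
      have h2 : 0 ≤ ∫ u in a..b, w (Winv (f u)) / w (Winv u) :=
        intervalIntegral.integral_nonneg hab
          (fun u hu => (hH01 f hPf u (le_trans ha hu.1)).1)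
      show (∫ u in (0:ℝ)..a, w (Winv (f u)) / w (Winv u))
        ≤ ∫ u in (0:ℝ)..b, w (Winv (f u)) / w (Winv u)
      rw [← hsplit]
      linarith
    · intro u hu
      constructor
      · exact intervalIntegral.integral_nonneg hu
          (fun v hv => (hH01 f hPf v hv.1).1)
      · have h1 : (∫ v in (0:ℝ)..u, w (Winv (f v)) / w (Winv v)) ≤ ∫ _ in (0:ℝ)..u, (1:ℝ) :=
          intervalIntegral.integral_mono_on hu (hInt f hPf 0 u le_rfl hu)
            intervalIntegrable_const (fun v hv => (hH01 f hPf v hv.1).2)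
        have h2 : (∫ _ in (0:ℝ)..u, (1:ℝ)) = u := by simp
        show (∫ v in (0:ℝ)..u, w (Winv (f v)) / w (Winv v)) ≤ u
        rw [h2] at h1
        exact h1
  have htend34 : Tendsto (fun u : ℝ => u * Real.exp (-((1/4) * Real.log u))) atTop atTop := by
    have h34 : Tendsto (fun u : ℝ => u ^ (3/4 : ℝ)) atTop atTop :=
      tendsto_rpow_atTop (by norm_num)
    apply h34.congr'
    filter_upwards [eventually_gt_atTop (0:ℝ)] with u hu0
    calc u ^ (3/4 : ℝ) = Real.exp (Real.log u * (3/4)) := Real.rpow_def_of_pos hu0 _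
      _ = Real.exp (Real.log u) * Real.exp (-((1/4) * Real.log u)) := by
          rw [← Real.exp_add]; ring_nf
      _ = u * Real.exp (-((1/4) * Real.log u)) := by rw [Real.exp_log hu0]
  have hev_u34 : ∀ᶠ u in atTop, T2 ≤ u * Real.exp (-((1/4) * Real.log u)) :=
    htend34.eventually_ge_atTop T2
  -- pointwise bound on the integrand
  have hPoint : ∀ (C U : ℝ) (k : ℕ), 1 ≤ C →
      ∀ᶠ u in atTop, ∀ f, P f →
        (∀ v, U ≤ v → v * Real.exp (-(C * (Real.log (Real.log v))^k)) ≤ f v) →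
        Real.exp (-(10 * C * (Real.log (Real.log u))^(k+1))) ≤
          w (Winv (f u)) / w (Winv u) := by
    intro C U k hC
    filter_upwards [eventually_ge_atTop T3, eventually_ge_atTop U,
      SWA.eventually_pow_loglog_le (10*C) (k+1), hev_u34] with u huT3 huU he3 hu34
    intro f hPf hf
    have huT2 : T2 ≤ u := le_trans hT3_ge huT3
    have huT : T ≤ u := le_trans hT2_ge huT2
    have hu0 : (0:ℝ) < u := lt_of_lt_of_le hT_pos huT
    obtain ⟨huWinv, hWinvub, hL2Winv⟩ := hWinv_bounds u huT3
    set xb := Winv u with hxb_def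
    have hxb0 : (0:ℝ) < xb := lt_of_lt_of_le hu0 huWinv
    have hxbT : T ≤ xb := le_trans huT huWinv
    have hWxb : W xb = u := hWinv_right u (le_of_lt hu0)
    obtain ⟨_, hb2u, _, _, _⟩ := hbasic u huT
    obtain ⟨_, hb2xb, _, _, _⟩ := hbasic xb hxbT
    set β := C * (Real.log (Real.log u))^k with hβ_def
    set γ := 5 * β * Real.log (Real.log xb) with hγ_def
    have hβ0 : 0 ≤ β := by
      apply mul_nonneg (by linarith)
      apply pow_nonneg
      linarith
    have hγ0 : 0 ≤ γ := by
      apply mul_nonneg (by linarith)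
      linarith
    have hγle : γ ≤ 10 * C * (Real.log (Real.log u))^(k+1) := by
      have h1 : γ ≤ 5 * β * (2 * Real.log (Real.log u)) := by
        apply mul_le_mul_of_nonneg_left hL2Winv (by linarith)
      calc γ ≤ 5 * β * (2 * Real.log (Real.log u)) := h1
        _ = 10 * C * ((Real.log (Real.log u))^k * Real.log (Real.log u)) := by
            rw [hβ_def]; ring
        _ = 10 * C * (Real.log (Real.log u))^(k+1) := by rw [← pow_succ]
    have hγ14 : γ ≤ (1/4) * Real.log u := le_trans hγle he3
    set z := xb * Real.exp (-γ) with hz_def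
    have hz_lb : u * Real.exp (-((1/4) * Real.log u)) ≤ z := by
      rw [hz_def]
      apply mul_le_mul huWinv (Real.exp_le_exp.2 (by linarith))
        (le_of_lt (Real.exp_pos _)) (le_of_lt hxb0)
    have hzT2 : T2 ≤ z := le_trans hu34 hz_lb
    have hzT : T ≤ z := le_trans hT2_ge hzT2
    have hz0 : (0:ℝ) < z := lt_of_lt_of_le hT_pos hzT
    have hzxb : z ≤ xb := by
      rw [hz_def]
      calc xb * Real.exp (-γ) ≤ xb * 1 := by
            apply mul_le_mul_of_nonneg_left _ (le_of_lt hxb0)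
            rw [Real.exp_le_one_iff]; linarith
        _ = xb := mul_one _
    have hlogz : Real.log z = Real.log xb - γ := by
      rw [hz_def, Real.log_mul (ne_of_gt hxb0) (ne_of_gt (Real.exp_pos _)), Real.log_exp]
      ring
    have hld := hlogdiff z xb hzT2 hzxb
    have hγβ : (Real.log xb - Real.log z) / (5 * Real.log (Real.log xb)) = β := by
      rw [hlogz]
      have h1 : Real.log xb - (Real.log xb - γ) = γ := by ring
      rw [h1, hγ_def]
      field_simp
    rw [hγβ, hWxb] at hld
    have hWz0 : (0:ℝ) < W z := hWpos z hz0
    have hWzle : W z ≤ u * Real.exp (-β) := by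
      have h1 : Real.log (W z) ≤ Real.log u - β := by linarith
      calc W z = Real.exp (Real.log (W z)) := (Real.exp_log hWz0).symm
        _ ≤ Real.exp (Real.log u - β) := Real.exp_le_exp.2 h1
        _ = Real.exp (Real.log u) * Real.exp (-β) := by rw [← Real.exp_add]; ring_nf
        _ = u * Real.exp (-β) := by rw [Real.exp_log hu0]
    have hWz_le_fu : W z ≤ f u := le_trans hWzle (hf u huU)
    have hy_ge : z ≤ Winv (f u) :=
      hWinv_ge z (f u) (le_of_lt hz0) (hPf.2 u (le_of_lt hu0)).1 hWz_le_fu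
    have hwxb : (0:ℝ) < w xb := hw_pos xb (le_of_lt hxb0)
    calc Real.exp (-(10 * C * (Real.log (Real.log u))^(k+1)))
        ≤ Real.exp (-γ) := Real.exp_le_exp.2 (by linarith)
      _ = z / xb := by rw [hz_def]; field_simp
      _ ≤ w z / w xb := hratio z xb hzT hzxb
      _ ≤ w (Winv (f u)) / w xb := by
          apply (div_le_div_iff_of_pos_right hwxb).2
          exact hw_mono (Set.mem_Ici.2 (le_of_lt hz0))
            (Set.mem_Ici.2 (hWinv_nonneg (f u) (hPf.2 u (le_of_lt hu0)).1)) hy_ge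

  -- the inductive step
  have hStep : ∀ (C U : ℝ) (k : ℕ), 1 ≤ C → ∃ U', ∀ f, P f →
      (∀ v, U ≤ v → v * Real.exp (-(C * (Real.log (Real.log v))^k)) ≤ f v) →
      ∀ x, U' ≤ x →
        x * Real.exp (-((10 * C + 1) * (Real.log (Real.log x))^(k+1))) ≤
          Gop w Winv f x := by
    intro C U k hC
    obtain ⟨U1, hU1⟩ := eventually_atTop.1 (hPoint C U k hC)
    set U2 := max U1 T with hU2_def
    have hU2T : T ≤ U2 := le_max_right _ _
    have hU2pos : (0:ℝ) < U2 := lt_of_lt_of_le hT_pos hU2T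
    refine ⟨2 * U2, ?_⟩
    intro f hPf hf x hx
    have hU2x : U2 ≤ x := by linarith
    have hxT : T ≤ x := le_trans hU2T hU2x
    have hx0 : (0:ℝ) < x := lt_of_lt_of_le hU2pos hU2x
    obtain ⟨_, hb2x, _, _, _⟩ := hbasic x hxT
    set ρ : ℝ → ℝ := fun u => Real.exp (-(10 * C * (Real.log (Real.log u))^(k+1)))
      with hρ_def
    have hρcont : ContinuousOn ρ (Set.uIcc U2 x) := by
      rw [Set.uIcc_of_le hU2x]
      have hsub : Set.Icc U2 x ⊆ Set.Ici T := fun t ht => le_trans hU2T ht.1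
      have hloglog : ContinuousOn (fun t : ℝ => Real.log (Real.log t)) (Set.Icc U2 x) := by
        apply ContinuousOn.comp Real.continuousOn_log
          ((Real.continuousOn_log.mono ?_)) ?_
        · intro t ht
          simp only [Set.mem_compl_iff, Set.mem_singleton_iff]
          exact ne_of_gt (lt_of_lt_of_le hT_pos (hsub ht))
        · intro t ht
          simp only [Set.mem_compl_iff, Set.mem_singleton_iff]
          have := (hbasic t (hsub ht)).1
          intro hcon; rw [hcon] at this; linarith [Real.exp_pos (2:ℝ)]
      exact Real.continuous_exp.comp_continuousOn
        ((continuousOn_const.mul (hloglog.pow (k+1))).neg)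
    have hsplit := intervalIntegral.integral_add_adjacent_intervals
      (hInt f hPf 0 U2 le_rfl (le_of_lt hU2pos)) (hInt f hPf U2 x (le_of_lt hU2pos) hU2x)
    have h1 : 0 ≤ ∫ u in (0:ℝ)..U2, w (Winv (f u)) / w (Winv u) :=
      intervalIntegral.integral_nonneg (le_of_lt hU2pos)
        (fun u hu => (hH01 f hPf u hu.1).1)
    have hcomp1 : (∫ u in U2..x, ρ u) ≤ ∫ u in U2..x, w (Winv (f u)) / w (Winv u) := by
      apply intervalIntegral.integral_mono_on hU2x
        (hρcont.intervalIntegrable) (hInt f hPf U2 x (le_of_lt hU2pos) hU2x)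
      intro u hu
      exact hU1 u (le_trans (le_max_left _ _) hu.1) f hPf hf
    have hcomp2 : (x - U2) * ρ x ≤ ∫ u in U2..x, ρ u := by
      have hc : (∫ _ in U2..x, ρ x) = (x - U2) * ρ x := by
        rw [intervalIntegral.integral_const]
        simp [smul_eq_mul]
      rw [← hc]
      apply intervalIntegral.integral_mono_on hU2x
        (by simp [intervalIntegrable_const]) hρcont.intervalIntegrable
      intro u hu
      have huT : T ≤ u := le_trans hU2T hu.1
      have hu1 : (1:ℝ) < u := by
        linarith [Real.add_one_le_exp (Real.exp 2), Real.exp_pos (2:ℝ), le_trans hT_ge huT]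
      have hL2le : Real.log (Real.log u) ≤ Real.log (Real.log x) :=
        Real.log_le_log (Real.log_pos hu1) (Real.log_le_log (by linarith) hu.2)
      have hL2u0 : (0:ℝ) ≤ Real.log (Real.log u) := by linarith [(hbasic u huT).2.1]
      apply Real.exp_le_exp.2
      apply neg_le_neg
      apply mul_le_mul_of_nonneg_left _ (by linarith : (0:ℝ) ≤ 10 * C)
      exact pow_le_pow_left₀ hL2u0 hL2le _
    have hmain : (x - U2) * ρ x ≤ Gop w Winv f x := by
      show (x - U2) * ρ x ≤ ∫ u in (0:ℝ)..x, w (Winv (f u)) / w (Winv u)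
      rw [← hsplit]
      linarith
    have hhalf : x / 2 * ρ x ≤ (x - U2) * ρ x := by
      apply mul_le_mul_of_nonneg_right _ (le_of_lt (Real.exp_pos _))
      linarith
    have hfinal : x * Real.exp (-((10 * C + 1) * (Real.log (Real.log x))^(k+1)))
        ≤ x / 2 * ρ x := by
      set a := (Real.log (Real.log x))^(k+1) with ha_def
      have ha1 : (1:ℝ) ≤ a := by
        rw [ha_def]
        calc (1:ℝ) = 1^(k+1) := (one_pow _).symm
          _ ≤ (Real.log (Real.log x))^(k+1) :=
              pow_le_pow_left₀ (by norm_num) (by linarith) _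
      have hexp2 : (2:ℝ) ≤ Real.exp 1 := by
        linarith [Real.add_one_le_exp (1:ℝ)]
      have hae : Real.exp (-a) ≤ 1/2 := by
        calc Real.exp (-a) ≤ Real.exp (-1) := Real.exp_le_exp.2 (by linarith)
          _ = 1 / Real.exp 1 := by rw [Real.exp_neg]; ring
          _ ≤ 1/2 := one_div_le_one_div_of_le (by norm_num) hexp2
      have heq : x * Real.exp (-((10 * C + 1) * a))
          = (x * Real.exp (-a)) * ρ x := by
        rw [hρ_def]
        simp only
        rw [← ha_def, mul_assoc, ← Real.exp_add]
        ring_nf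
      rw [heq]
      apply mul_le_mul_of_nonneg_right _ (le_of_lt (Real.exp_pos _))
      calc x * Real.exp (-a) ≤ x * (1/2) := mul_le_mul_of_nonneg_left hae (le_of_lt hx0)
        _ = x / 2 := by ring
    linarith
  -- the iteration
  have hIter : ∀ (η : ℝ), 0 < η → η < 1 → ∀ m : ℕ,
      ∃ C U : ℝ, 1 ≤ C ∧ P ((Gop w Winv)^[m] (fun x => η * x)) ∧
        ∀ u, U ≤ u → u * Real.exp (-(C * (Real.log (Real.log u))^(m+1))) ≤
          (Gop w Winv)^[m] (fun x => η * x) u := by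
    intro η h0 h1 m
    induction m with
    | zero =>
      refine ⟨max 1 (-Real.log η), Real.exp (Real.exp 1), le_max_left _ _, ?_, ?_⟩
      · constructor
        · intro a _ b _ hab
          simp only [Function.iterate_zero, id_eq]
          exact mul_le_mul_of_nonneg_left hab (le_of_lt h0)
        · intro u hu
          simp only [Function.iterate_zero, id_eq]
          exact ⟨mul_nonneg (le_of_lt h0) hu, by nlinarith⟩
      · intro u hu
        simp only [Function.iterate_zero, id_eq]
        have hu0 : (0:ℝ) < u := lt_of_lt_of_le (Real.exp_pos _) hu
        have hlog1 : Real.exp 1 ≤ Real.log u := by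
          calc Real.exp 1 = Real.log (Real.exp (Real.exp 1)) := by simp
            _ ≤ Real.log u := Real.log_le_log (Real.exp_pos _) hu
        have hL2_1 : (1:ℝ) ≤ Real.log (Real.log u) := by
          calc (1:ℝ) = Real.log (Real.exp 1) := by simp
            _ ≤ Real.log (Real.log u) := Real.log_le_log (Real.exp_pos _) hlog1
        set c := max 1 (-Real.log η) with hc_def
        have hc1 : (1:ℝ) ≤ c := le_max_left _ _
        have hcη : -Real.log η ≤ c := le_max_right _ _
        have hexp_le : Real.exp (-(c * (Real.log (Real.log u))^(0+1))) ≤ η := by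
          have h2 : c ≤ c * (Real.log (Real.log u))^(0+1) := by
            rw [pow_one]
            nlinarith
          calc Real.exp (-(c * (Real.log (Real.log u))^(0+1)))
              ≤ Real.exp (-c) := Real.exp_le_exp.2 (by linarith)
            _ ≤ Real.exp (Real.log η) := Real.exp_le_exp.2 (by linarith)
            _ = η := Real.exp_log h0
        calc u * Real.exp (-(c * (Real.log (Real.log u))^(0+1)))
            ≤ u * η := mul_le_mul_of_nonneg_left hexp_le (le_of_lt hu0)
          _ = η * u := mul_comm _ _
    | succ m ih =>
      obtain ⟨C, U, hC, hPm, hbd⟩ := ih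
      obtain ⟨U', hU'⟩ := hStep C U (m+1) hC
      refine ⟨10 * C + 1, U', by linarith, ?_, ?_⟩
      · rw [Function.iterate_succ_apply']
        exact hGopP _ hPm
      · intro u hu
        rw [Function.iterate_succ_apply']
        exact hU' _ hPm hbd u hu
  -- unboundedness of every iterate
  have hUnbdd : ∀ (η : ℝ), 0 < η → η < 1 → ∀ m : ℕ,
      ¬ BddOn ((Gop w Winv)^[m] (fun x => η * x)) := by
    intro η h0 h1 m hbdd
    obtain ⟨C, U, hC, hPm, hbd⟩ := hIter η h0 h1 m
    obtain ⟨M, hM⟩ := hbdd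
    rw [mem_upperBounds] at hM
    obtain ⟨x, ⟨⟨hxM, hxU⟩, hxpow⟩, hx0⟩ :=
      (((htend34.eventually_gt_atTop M).and (eventually_ge_atTop U)).and
        (SWA.eventually_pow_loglog_le C (m+1))).and (eventually_ge_atTop (0:ℝ)) |>.exists
    have hle : (Gop w Winv)^[m] (fun x => η * x) x ≤ M :=
      hM _ ⟨x, Set.mem_Ici.2 hx0, rfl⟩
    have hge : x * Real.exp (-((1/4) * Real.log x)) ≤
        (Gop w Winv)^[m] (fun x => η * x) x := by
      calc x * Real.exp (-((1/4) * Real.log x))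
          ≤ x * Real.exp (-(C * (Real.log (Real.log x))^(m+1))) := by
            apply mul_le_mul_of_nonneg_left _ hx0
            exact Real.exp_le_exp.2 (by linarith)
        _ ≤ (Gop w Winv)^[m] (fun x => η * x) x := hbd x hxU
    linarith
  have hIdx : ∀ (η : ℝ), 0 < η → η < 1 → iIdx w Winv η = (⊤ : ℕ∞) := by
    intro η h0 h1
    rw [iIdx]
    have hempty : {n : ℕ∞ | ∃ m : ℕ, n = (m : ℕ∞) ∧ 2 ≤ m ∧
        BddOn ((Gop w Winv)^[m-1] (fun x => η * x))} = ∅ := by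
      rw [Set.eq_empty_iff_forall_notMem]
      rintro n ⟨m, rfl, hm2, hbdd⟩
      exact hUnbdd η h0 h1 (m - 1) hbdd
    rw [hempty]
    exact sInf_empty
  constructor
  · apply le_antisymm le_top
    have h14 : (1/4 : ℝ) ∈ Set.Ioo (0:ℝ) (1/2) := by norm_num
    calc (⊤ : ℕ∞) = iIdx w Winv (1/4) := (hIdx (1/4) (by norm_num) (by norm_num)).symm
      _ ≤ iMinus w Winv := by
          rw [iMinus]
          exact le_biSup _ h14
  · apply le_antisymm le_top
    rw [iPlus]
    apply le_iInf₂
    intro η hη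
    rw [hIdx η (by linarith [hη.1]) hη.2]
end

section
/- A state C = (z(x), n(x,x+1))_{x∈ℤ} of non-negative integers is reachable (i.e. {x : n(x,x+1) > 0} is an integer interval [a, b−1] containing 0 in [a,b], and z(x) = n(x,x+1) + n(x−1,x) for all x) if and only if it can be created from the trivial all-zero state by a finite nearest-neighbour path on ℤ starting and ending at 0, where traversing the oriented edge (x,x+1) increments n(x,x+1) and visiting x increments z(x), except that the final visit at the origin is not counted in z(0). -/
open Finset

lemma card_filter_range_succ (P : ℕ → Prop) [DecidablePred P] (n : ℕ) :
    ((range (n+1)).filter P).card = ((range n).filter P).card + if P n then 1 else 0 := by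
  rw [Finset.range_add_one, Finset.filter_insert]
  split_ifs with h
  · rw [Finset.card_insert_of_notMem (fun hm => by simpa using (Finset.mem_filter.1 hm).1)]
  · rfl

lemma cross_diff (p : ℕ → ℤ) (x : ℤ) :
    ∀ N : ℕ, (∀ i, i < N → p (i + 1) = p i + 1 ∨ p (i + 1) = p i - 1) →
    (((range N).filter (fun i => p i = x ∧ p (i + 1) = x + 1)).card : ℤ)
      - ((range N).filter (fun i => p i = x + 1 ∧ p (i + 1) = x)).card
    = (if x < p N then 1 else 0) - (if x < p 0 then 1 else 0) := by
  intro N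
  induction N with
  | zero => simp
  | succ n ih =>
    intro hstep
    rw [card_filter_range_succ, card_filter_range_succ]
    have h1 := ih (fun i hi => hstep i (Nat.lt_succ_of_lt hi))
    have h2 := hstep n (Nat.lt_succ_self n)
    push_cast
    rcases h2 with h2 | h2 <;> rw [h2] <;> split_ifs <;> omega

lemma up_eq_down (p : ℕ → ℤ) (N : ℕ) (h0 : p 0 = 0) (hN : p N = 0)
    (hstep : ∀ i, i < N → p (i + 1) = p i + 1 ∨ p (i + 1) = p i - 1) (x : ℤ) :
    ((range N).filter (fun i => p i = x ∧ p (i + 1) = x + 1)).card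
      = ((range N).filter (fun i => p i = x + 1 ∧ p (i + 1) = x)).card := by
  have := cross_diff p x N hstep
  rw [h0, hN] at this
  split_ifs at this <;> omega

lemma visits_eq (p : ℕ → ℤ) (N : ℕ)
    (hstep : ∀ i, i < N → p (i + 1) = p i + 1 ∨ p (i + 1) = p i - 1) (x : ℤ) :
    ((range N).filter (fun i => p i = x)).card
      = ((range N).filter (fun i => p i = x ∧ p (i + 1) = x + 1)).card
        + ((range N).filter (fun i => p i = x ∧ p (i + 1) = x - 1)).card := by
  rw [Finset.card_filter, Finset.card_filter, Finset.card_filter, ← Finset.sum_add_distrib]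
  apply Finset.sum_congr rfl
  intro i hi
  have := hstep i (Finset.mem_range.1 hi)
  split_ifs <;> omega

/-- visits to `x` split into up-crossings of `(x,x+1)` and up-crossings of `(x-1,x)`,
for a closed path. -/
lemma visits_split (p : ℕ → ℤ) (N : ℕ) (h0 : p 0 = 0) (hN : p N = 0)
    (hstep : ∀ i, i < N → p (i + 1) = p i + 1 ∨ p (i + 1) = p i - 1) (x : ℤ) :
    ((range N).filter (fun i => p i = x)).card
      = ((range N).filter (fun i => p i = x ∧ p (i + 1) = x + 1)).card
        + ((range N).filter (fun i => p i = x - 1 ∧ p (i + 1) = x - 1 + 1)).card := by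
  rw [visits_eq p N hstep x, up_eq_down p N h0 hN hstep (x - 1)]
  congr 2
  apply Finset.filter_congr
  intro i _
  constructor
  · rintro ⟨h1, h2⟩; constructor <;> omega
  · rintro ⟨h1, h2⟩; constructor <;> omega

lemma ivt (p : ℕ → ℤ) (x : ℤ) :
    ∀ t s : ℕ, s ≤ t → (∀ i, i < t → p (i + 1) = p i + 1 ∨ p (i + 1) = p i - 1) →
    p s ≤ x → x < p t →
    ∃ i, s ≤ i ∧ i < t ∧ p i = x ∧ p (i + 1) = x + 1 := by
  intro t
  induction t with
  | zero =>
    intro s hs _ h1 h2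
    have : s = 0 := Nat.le_zero.1 hs
    subst this
    omega
  | succ n ih =>
    intro s hs hstep h1 h2
    have hsn : s ≤ n := by
      rcases Nat.lt_or_ge s (n+1) with h | h
      · omega
      · exfalso; have : s = n + 1 := by omega
        subst this; omega
    rcases le_or_gt (p n) x with h | h
    · refine ⟨n, hsn, Nat.lt_succ_self n, ?_, ?_⟩ <;>
        (have := hstep n (Nat.lt_succ_self n); omega)
    · obtain ⟨i, hi1, hi2, hi3⟩ := ih s hsn (fun i hi => hstep i (Nat.lt_succ_of_lt hi)) h1 h
      exact ⟨i, hi1, Nat.lt_succ_of_lt hi2, hi3⟩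

lemma splice_sum (f g : ℕ → ℕ) (N t : ℕ) (ht : t ≤ N)
    (h1 : ∀ i, i < t → f i = g i) (h2 : ∀ i, t ≤ i → i < N → f (i + 2) = g i) :
    ∑ i ∈ range (N + 2), f i = (∑ i ∈ range N, g i) + f t + f (t + 1) := by
  simp only [Finset.range_eq_Ico]
  rw [← Finset.sum_Ico_consecutive (f := f) (m := 0) (n := t) (k := N + 2) (by omega) (by omega)]
  rw [← Finset.sum_Ico_consecutive (f := f) (m := t) (n := t + 2) (k := N + 2) (by omega) (by omega)]
  rw [← Finset.sum_Ico_consecutive (f := g) (m := 0) (n := t) (k := N) (by omega) (by omega)]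
  have e1 : ∑ i ∈ Finset.Ico 0 t, f i = ∑ i ∈ Finset.Ico 0 t, g i :=
    Finset.sum_congr rfl (fun i hi => h1 i (Finset.mem_Ico.1 hi).2)
  have e2 : ∑ i ∈ Finset.Ico t (t + 2), f i = f t + f (t + 1) := by
    have h : t + 2 = t + 1 + 1 := by omega
    rw [h, Finset.sum_Ico_succ_top (by omega), Finset.sum_Ico_succ_top (by omega)]
    simp
  have e3 : ∑ i ∈ Finset.Ico (t + 2) (N + 2), f i = ∑ i ∈ Finset.Ico t N, g i := by
    rw [Finset.sum_Ico_eq_sum_range, Finset.sum_Ico_eq_sum_range]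
    have hN : N + 2 - (t + 2) = N - t := by omega
    rw [hN]
    apply Finset.sum_congr rfl
    intro i hi
    have hi' := Finset.mem_range.1 hi
    have h : t + 2 + i = (t + i) + 2 := by omega
    rw [h, h2 (t + i) (by omega) (by omega)]
  rw [e1, e2, e3]
  ring

lemma spike (p : ℕ → ℤ) (N t : ℕ) (ht : t ≤ N) (ε : ℤ) (hε : ε = 1 ∨ ε = -1)
    (hstep : ∀ i, i < N → p (i + 1) = p i + 1 ∨ p (i + 1) = p i - 1) :
    ∃ q : ℕ → ℤ, q 0 = p 0 ∧ q (N + 2) = p N ∧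
      (∀ i, i < N + 2 → q (i + 1) = q i + 1 ∨ q (i + 1) = q i - 1) ∧
      (∀ x : ℤ, (((range (N + 2)).filter (fun i => q i = x ∧ q (i + 1) = x + 1)).card : ℕ)
        = ((range N).filter (fun i => p i = x ∧ p (i + 1) = x + 1)).card
          + if x = min (p t) (p t + ε) then 1 else 0) := by
  classical
  set q : ℕ → ℤ := fun i => if i ≤ t then p i else if i = t + 1 then p t + ε else p (i - 2) with hq
  have qlow : ∀ i, i ≤ t → q i = p i := by intro i hi; simp [hq, hi]
  have qmid : q (t + 1) = p t + ε := by simp [hq]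
  have qhigh : ∀ i, t + 2 ≤ i → q i = p (i - 2) := by
    intro i hi
    simp only [hq]
    rw [if_neg (by omega), if_neg (by omega)]
  have hqt2 : q (t + 1 + 1) = p t := by
    rw [qhigh (t + 1 + 1) (by omega)]
    congr 1
  refine ⟨q, qlow 0 (Nat.zero_le t), ?_, ?_, ?_⟩
  · rw [qhigh (N + 2) (by omega)]
    congr 1
  · intro i hi
    rcases Nat.lt_or_ge i t with h | h
    · rw [qlow i (by omega), qlow (i + 1) (by omega)]
      exact hstep i (by omega)
    rcases Nat.eq_or_lt_of_le h with h' | h'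
    · rw [← h'] at *
      rw [qlow t le_rfl, qmid]
      omega
    rcases Nat.eq_or_lt_of_le h' with h'' | h''
    · rw [← h''] at *
      rw [qmid, hqt2]
      omega
    · rw [qhigh i (by omega), qhigh (i + 1) (by omega)]
      have e1 : i + 1 - 2 = (i - 2) + 1 := by omega
      rw [e1]
      exact hstep (i - 2) (by omega)
  · intro x
    rw [Finset.card_filter, Finset.card_filter]
    rw [splice_sum (fun i => if q i = x ∧ q (i + 1) = x + 1 then 1 else 0)
        (fun i => if p i = x ∧ p (i + 1) = x + 1 then 1 else 0) N t ht ?_ ?_]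
    · have hqt : q t = p t := qlow t le_rfl
      rw [add_assoc, hqt, qmid, hqt2]
      have key : ((if p t = x ∧ p t + ε = x + 1 then 1 else 0)
          + if p t + ε = x ∧ p t = x + 1 then (1:ℕ) else 0)
          = if x = min (p t) (p t + ε) then 1 else 0 := by
        rcases hε with h | h <;> subst h <;> split_ifs <;> omega
      rw [key]
    · intro i hi
      show (if q i = x ∧ q (i + 1) = x + 1 then 1 else 0)
        = (if p i = x ∧ p (i + 1) = x + 1 then 1 else 0)
      rw [qlow i (by omega), qlow (i + 1) (by omega)]
    · intro i h1 h2
      show (if q (i + 2) = x ∧ q (i + 2 + 1) = x + 1 then 1 else 0)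
        = (if p i = x ∧ p (i + 1) = x + 1 then 1 else 0)
      rw [qhigh (i + 2) (by omega), qhigh (i + 2 + 1) (by omega)]
      have e1 : i + 2 - 2 = i := by omega
      have e2 : i + 2 + 1 - 2 = i + 1 := by omega
      rw [e1, e2]

lemma Ico_erase_top' (a b : ℤ) : (Finset.Ico a b).erase (b-1) = Finset.Ico a (b-1) := by
  ext x; simp only [Finset.mem_erase, Finset.mem_Ico]; omega

lemma Ico_erase_bot' (a b : ℤ) : (Finset.Ico a b).erase a = Finset.Ico (a+1) b := by
  ext x; simp only [Finset.mem_erase, Finset.mem_Ico]; omega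
lemma exists_path (S : ℕ) : ∀ (nE : ℤ → ℕ) (a b : ℤ), a ≤ 0 → 0 ≤ b →
    {x : ℤ | 0 < nE x} = Set.Ico a b → ∑ x ∈ Finset.Ico a b, nE x = S →
    ∃ (N : ℕ) (p : ℕ → ℤ), p 0 = 0 ∧ p N = 0 ∧
      (∀ i, i < N → p (i + 1) = p i + 1 ∨ p (i + 1) = p i - 1) ∧
      (∀ x, nE x = ((range N).filter (fun i => p i = x ∧ p (i + 1) = x + 1)).card) := by
  induction S using Nat.strong_induction_on with
  | _ S ih =>
  intro nE a b ha hb hsupp hsum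
  have hmem : ∀ x : ℤ, 0 < nE x ↔ (a ≤ x ∧ x < b) := by
    intro x
    have := Set.ext_iff.1 hsupp x
    simpa [Set.mem_Ico] using this
  rcases Nat.eq_zero_or_pos S with hS | hS
  · -- trivial state
    refine ⟨0, fun _ => 0, rfl, rfl, by omega, ?_⟩
    intro x
    simp only [Finset.range_zero, Finset.filter_empty, Finset.card_empty]
    by_contra hx
    have hx' : 0 < nE x := by omega
    have hxm : x ∈ Finset.Ico a b := by
      rw [Finset.mem_Ico]; exact (hmem x).1 hx'
    have := Finset.single_le_sum (f := nE) (fun i _ => Nat.zero_le _) hxm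
    omega
  · -- S > 0
    have hab : a < b := by
      by_contra hab
      rw [Finset.Ico_eq_empty (by omega)] at hsum
      simp at hsum
      omega
    rcases lt_or_ge 0 b with hbpos | hbz
    · -- work at top edge c = b - 1
      set c : ℤ := b - 1 with hc_def
      have hcmem : c ∈ Finset.Ico a b := by rw [Finset.mem_Ico]; omega
      have hc : 0 < nE c := (hmem c).2 ⟨by omega, by omega⟩
      set nE' : ℤ → ℕ := fun x => if x = c then nE c - 1 else nE x with hnE'
      have hsum_split : S = nE c + ∑ x ∈ (Finset.Ico a b).erase c, nE x := by
        rw [← hsum]; exact (Finset.add_sum_erase _ nE hcmem).symm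
      have herase_eq : ∑ x ∈ (Finset.Ico a b).erase c, nE' x
          = ∑ x ∈ (Finset.Ico a b).erase c, nE x := by
        apply Finset.sum_congr rfl
        intro x hx
        have : x ≠ c := (Finset.mem_erase.1 hx).1
        simp [hnE', this]
      obtain ⟨b', hb'0, hcb', hsupp', hsum'⟩ :
          ∃ b' : ℤ, 0 ≤ b' ∧ c ≤ b' ∧ {x : ℤ | 0 < nE' x} = Set.Ico a b' ∧
            ∑ x ∈ Finset.Ico a b', nE' x = S - 1 := by
        rcases eq_or_lt_of_le (by omega : 1 ≤ nE c) with h1 | h1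
        · refine ⟨c, by omega, le_rfl, ?_, ?_⟩
          · ext x
            simp only [Set.mem_setOf_eq, Set.mem_Ico, hnE']
            by_cases hx : x = c
            · subst hx; simp; omega
            · rw [if_neg hx]
              rw [hmem x]
              constructor
              · rintro ⟨h2, h3⟩; exact ⟨h2, by omega⟩
              · rintro ⟨h2, h3⟩; exact ⟨h2, by omega⟩
          · rw [hc_def, ← Ico_erase_top' a b, herase_eq]
            omega
        · refine ⟨b, hb, by omega, ?_, ?_⟩
          · ext x
            simp only [Set.mem_setOf_eq, Set.mem_Ico, hnE']
            by_cases hx : x = c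
            · subst hx; simp; omega
            · rw [if_neg hx, hmem x]
          · rw [← Finset.add_sum_erase _ nE' hcmem, herase_eq]
            have : nE' c = nE c - 1 := by simp [hnE']
            omega
      obtain ⟨N', p', hp0, hpN, hstep', hcount'⟩ :=
        ih (S - 1) (by omega) nE' a b' ha hb'0 hsupp' hsum'
      -- find t ≤ N' with p' t = c
      obtain ⟨t, htN, hpt⟩ : ∃ t, t ≤ N' ∧ p' t = c := by
        rcases eq_or_lt_of_le (by omega : (0:ℤ) ≤ c) with h0 | h0
        · exact ⟨0, Nat.zero_le _, by rw [hp0, h0]⟩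
        · have hmem' : 0 < nE' (c - 1) := by
            have hne : c - 1 ≠ c := by omega
            have : 0 < nE (c - 1) := (hmem _).2 ⟨by omega, by omega⟩
            simpa [hnE', hne] using this
          rw [hcount' (c-1)] at hmem'
          rw [Finset.card_pos] at hmem'
          obtain ⟨i, hi⟩ := hmem'
          rw [Finset.mem_filter, Finset.mem_range] at hi
          exact ⟨i + 1, by omega, by have := hi.2.2; omega⟩
      obtain ⟨q, hq0, hqN, hqstep, hqcount⟩ := spike p' N' t htN 1 (Or.inl rfl) hstep'
      refine ⟨N' + 2, q, by rw [hq0, hp0], by rw [hqN, hpN], hqstep, ?_⟩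
      intro x
      rw [hqcount x, ← hcount' x, hpt]
      have hminc : min c (c + 1) = c := by omega
      rw [hminc]
      by_cases hx : x = c
      · subst hx; simp [hnE']; omega
      · simp [hnE', hx]
    · -- b = 0, work at bottom edge a
      have hb0 : b = 0 := by omega
      have hamem : a ∈ Finset.Ico a b := by rw [Finset.mem_Ico]; omega
      have hc : 0 < nE a := (hmem a).2 ⟨le_rfl, hab⟩
      set nE' : ℤ → ℕ := fun x => if x = a then nE a - 1 else nE x with hnE'
      have hsum_split : S = nE a + ∑ x ∈ (Finset.Ico a b).erase a, nE x := by
        rw [← hsum]; exact (Finset.add_sum_erase _ nE hamem).symm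
      have herase_eq : ∑ x ∈ (Finset.Ico a b).erase a, nE' x
          = ∑ x ∈ (Finset.Ico a b).erase a, nE x := by
        apply Finset.sum_congr rfl
        intro x hx
        have : x ≠ a := (Finset.mem_erase.1 hx).1
        simp [hnE', this]
      obtain ⟨a', ha'0, haa', hsupp', hsum'⟩ :
          ∃ a' : ℤ, a' ≤ 0 ∧ a' ≤ a + 1 ∧ {x : ℤ | 0 < nE' x} = Set.Ico a' b ∧
            ∑ x ∈ Finset.Ico a' b, nE' x = S - 1 := by
        rcases eq_or_lt_of_le (by omega : 1 ≤ nE a) with h1 | h1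
        · refine ⟨a + 1, by omega, le_rfl, ?_, ?_⟩
          · ext x
            simp only [Set.mem_setOf_eq, Set.mem_Ico, hnE']
            by_cases hx : x = a
            · subst hx; simp; omega
            · rw [if_neg hx, hmem x]
              constructor
              · rintro ⟨h2, h3⟩; exact ⟨by omega, h3⟩
              · rintro ⟨h2, h3⟩; exact ⟨by omega, h3⟩
          · rw [← Ico_erase_bot' a b, herase_eq]
            omega
        · refine ⟨a, ha, by omega, ?_, ?_⟩
          · ext x
            simp only [Set.mem_setOf_eq, Set.mem_Ico, hnE']
            by_cases hx : x = a
            · subst hx; simp; omega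
            · rw [if_neg hx, hmem x]
          · rw [← Finset.add_sum_erase _ nE' hamem, herase_eq]
            have : nE' a = nE a - 1 := by simp [hnE']
            omega
      obtain ⟨N', p', hp0, hpN, hstep', hcount'⟩ :=
        ih (S - 1) (by omega) nE' a' b ha'0 hb hsupp' hsum'
      -- find t ≤ N' with p' t = a + 1
      obtain ⟨t, htN, hpt⟩ : ∃ t, t ≤ N' ∧ p' t = a + 1 := by
        rcases eq_or_lt_of_le (by omega : a + 1 ≤ 0) with h0 | h0
        · exact ⟨0, Nat.zero_le _, by rw [hp0, h0]⟩
        · have hmem' : 0 < nE' (a + 1) := by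
            have hne : a + 1 ≠ a := by omega
            have : 0 < nE (a + 1) := (hmem _).2 ⟨by omega, by omega⟩
            simpa [hnE', hne] using this
          rw [hcount' (a+1)] at hmem'
          rw [Finset.card_pos] at hmem'
          obtain ⟨i, hi⟩ := hmem'
          rw [Finset.mem_filter, Finset.mem_range] at hi
          exact ⟨i, by omega, hi.2.1⟩
      obtain ⟨q, hq0, hqN, hqstep, hqcount⟩ := spike p' N' t htN (-1) (Or.inr rfl) hstep'
      refine ⟨N' + 2, q, by rw [hq0, hp0], by rw [hqN, hpN], hqstep, ?_⟩
      intro x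
      rw [hqcount x, ← hcount' x, hpt]
      have hmina : min (a + 1) (a + 1 + -1) = a := by omega
      rw [hmina]
      by_cases hx : x = a
      · subst hx; simp [hnE']; omega
      · simp [hnE', hx]

/-- A state `C = (z(x), n(x,x+1))_{x∈ℤ}` (non-negative integers with
`n(x,x+1) ≤ z(x+1)`) is reachable — i.e. `{x : n(x,x+1) > 0}` is an integer interval
`[a, b−1]` with `a ≤ 0 ≤ b` and `z(x) = n(x,x+1) + n(x−1,x)` for all `x` — if and
only if it is created from the trivial state by a finite nearest-neighbour path on
`ℤ` starting and ending at `0`: `n(x,x+1)` counts traversals of the oriented edge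
`(x,x+1)` and `z(x)` counts the visits to `x` except the terminal visit at `0`. -/
theorem reachable_iff_path
    (z : ℤ → ℕ) (nE : ℤ → ℕ)
    (hstate : ∀ x, nE x ≤ z (x + 1)) :
    ((∃ a b : ℤ, a ≤ 0 ∧ 0 ≤ b ∧ {x : ℤ | 0 < nE x} = Set.Ico a b) ∧
      (∀ x, z x = nE x + nE (x - 1)))
    ↔
    (∃ (N : ℕ) (p : ℕ → ℤ), p 0 = 0 ∧ p N = 0 ∧
      (∀ i, i < N → p (i + 1) = p i + 1 ∨ p (i + 1) = p i - 1) ∧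
      (∀ x, nE x =
        ((Finset.range N).filter (fun i => p i = x ∧ p (i + 1) = x + 1)).card) ∧
      (∀ x, z x = ((Finset.range N).filter (fun i => p i = x)).card)) := by
  constructor
  · rintro ⟨⟨a, b, ha, hb, hsupp⟩, hz⟩
    obtain ⟨N, p, hp0, hpN, hstep, hcount⟩ :=
      exists_path (∑ x ∈ Finset.Ico a b, nE x) nE a b ha hb hsupp rfl
    refine ⟨N, p, hp0, hpN, hstep, hcount, ?_⟩
    intro x
    rw [hz x, hcount x, hcount (x - 1), visits_split p N hp0 hpN hstep x]
  · rintro ⟨N, p, hp0, hpN, hstep, hcount, hz⟩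
    constructor
    · -- interval structure of the support
      have hne : ((range (N + 1)).image p).Nonempty :=
        ⟨p 0, Finset.mem_image_of_mem p (Finset.mem_range.2 (Nat.succ_pos N))⟩
      set a : ℤ := ((range (N + 1)).image p).min' hne with ha_def
      set b : ℤ := ((range (N + 1)).image p).max' hne with hb_def
      have hmem0 : p 0 ∈ (range (N + 1)).image p :=
        Finset.mem_image_of_mem p (Finset.mem_range.2 (Nat.succ_pos N))
      have ha0 : a ≤ 0 := by
        have := Finset.min'_le _ _ hmem0
        omega
      have hb0 : 0 ≤ b := by
        have := Finset.le_max' _ _ hmem0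
        omega
      refine ⟨a, b, ha0, hb0, ?_⟩
      ext x
      simp only [Set.mem_setOf_eq, Set.mem_Ico]
      constructor
      · intro hx
        rw [hcount x, Finset.card_pos] at hx
        obtain ⟨i, hi⟩ := hx
        rw [Finset.mem_filter, Finset.mem_range] at hi
        obtain ⟨hiN, hpi, hpi1⟩ := hi
        constructor
        · have : p i ∈ (range (N + 1)).image p :=
            Finset.mem_image_of_mem p (Finset.mem_range.2 (by omega))
          have := Finset.min'_le _ _ this
          omega
        · have : p (i + 1) ∈ (range (N + 1)).image p :=
            Finset.mem_image_of_mem p (Finset.mem_range.2 (by omega))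
          have := Finset.le_max' _ _ this
          omega
      · rintro ⟨hax, hxb⟩
        rw [hcount x]
        rw [Finset.card_pos]
        rcases le_or_gt 0 x with hx0 | hx0
        · -- use the maximum
          obtain ⟨j, hj, hpj⟩ := Finset.mem_image.1 (Finset.max'_mem _ hne)
          rw [Finset.mem_range] at hj
          obtain ⟨i, hi1, hi2, hi3, hi4⟩ :=
            ivt p x j 0 (Nat.zero_le j) (fun i hi => hstep i (by omega))
              (by omega) (by rw [hpj]; omega)
          exact ⟨i, Finset.mem_filter.2 ⟨Finset.mem_range.2 (by omega), hi3, hi4⟩⟩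
        · -- use the minimum
          obtain ⟨j, hj, hpj⟩ := Finset.mem_image.1 (Finset.min'_mem _ hne)
          rw [Finset.mem_range] at hj
          obtain ⟨i, hi1, hi2, hi3, hi4⟩ :=
            ivt p x N j (by omega) (fun i hi => hstep i (by omega))
              (by rw [hpj]; omega) (by omega)
          exact ⟨i, Finset.mem_filter.2 ⟨Finset.mem_range.2 (by omega), hi3, hi4⟩⟩
    · intro x
      rw [hz x, hcount x, hcount (x - 1), visits_split p N hp0 hpN hstep x]
end
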